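/- Let g : ℝⁿ → ℝ be a positive definite homogeneous polynomial of even degree d (i.e., g(x) > 0 for all x ≠ 0 and g(tx) = t^d g(x) for t > 0). Then the Lebesgue volume of the sublevel set G = {x : g(x) ≤ 1} is finite and equals (1/Γ(1 + n/d)) ∫_{ℝⁿ} exp(-g(x)) dx. -/

import Mathlib

open MeasureTheory MvPolynomial Set Pointwise

lemma aux_eval_smul_homog {n d : ℕ} (g : MvPolynomial (Fin n) ℝ) (hg : g.IsHomogeneous d)
    (c : ℝ) (x : Fin n → ℝ) : eval (c • x) g = c ^ d * eval x g := by
  rw [eval_eq, eval_eq, Finset.mul_sum]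
  refine Finset.sum_congr rfl fun s hs => ?_
  have hdeg : s.degree = d := by
    have := hg (MvPolynomial.mem_support_iff.mp hs)
    rw [Finsupp.degree_eq_weight_one]; exact this
  have : ∏ i ∈ s.support, (c • x) i ^ s i
      = c ^ d * ∏ i ∈ s.support, x i ^ s i := by
    simp only [Pi.smul_apply, smul_eq_mul, mul_pow]
    rw [Finset.prod_mul_distrib, Finset.prod_pow_eq_pow_sum, ← hdeg]
    rfl
  rw [this]; ring

lemma aux_scale_measure {n d : ℕ} (hd : 2 ≤ d) (f : (Fin n → ℝ) → ℝ)
    (hsc : ∀ (c : ℝ) x, f (c • x) = c ^ d * f x) {s : ℝ} (hs : 0 < s) :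
    volume {x : Fin n → ℝ | f x ≤ s}
      = ENNReal.ofReal (s ^ ((n : ℝ) / d)) * volume {x : Fin n → ℝ | f x ≤ 1} := by
  have hd0 : (0:ℝ) < d := by positivity
  set c : ℝ := s ^ (1 / (d:ℝ)) with hc
  have hcpos : 0 < c := Real.rpow_pos_of_pos hs _
  have hcd : c ^ d = s := by
    rw [hc, ← Real.rpow_natCast (s ^ (1/(d:ℝ))) d, ← Real.rpow_mul hs.le]
    rw [one_div_mul_cancel hd0.ne', Real.rpow_one]
  have hset : {x : Fin n → ℝ | f x ≤ s} = c • {x : Fin n → ℝ | f x ≤ 1} := by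
    ext x
    rw [Set.mem_smul_set_iff_inv_smul_mem₀ hcpos.ne']
    simp only [Set.mem_setOf_eq, hsc]
    rw [inv_pow, inv_mul_le_iff₀ (pow_pos hcpos d), mul_one, hcd]
  rw [hset, Measure.addHaar_smul_of_nonneg volume hcpos.le]
  congr 2
  rw [hc, ← Real.rpow_natCast (s ^ (1/(d:ℝ))) _, ← Real.rpow_mul hs.le]
  · congr 1
    rw [Module.finrank_pi]
    simp
    ring

lemma aux_finite {n d : ℕ} (hn : 1 ≤ n) (hd : 2 ≤ d) (f : (Fin n → ℝ) → ℝ)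
    (hcont : Continuous f)
    (hsc : ∀ (c : ℝ) x, f (c • x) = c ^ d * f x)
    (hpos : ∀ x, x ≠ 0 → 0 < f x) :
    volume {x : Fin n → ℝ | f x ≤ 1} ≠ ⊤ := by
  haveI : Nonempty (Fin n) := ⟨⟨0, hn⟩⟩
  obtain ⟨z, hz, hmin⟩ := (isCompact_sphere (0 : Fin n → ℝ) 1).exists_isMinOn
    (NormedSpace.sphere_nonempty.mpr zero_le_one) hcont.continuousOn
  have hz1 : ‖z‖ = 1 := by simpa using hz
  have hzne : z ≠ 0 := by intro h; rw [h] at hz1; simp at hz1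
  have hm : 0 < f z := hpos z hzne
  set m := f z
  have hbound : {x : Fin n → ℝ | f x ≤ 1} ⊆ Metric.closedBall 0 (max 1 (1/m)) := by
    intro x hx
    simp only [Metric.mem_closedBall, dist_zero_right]
    rcases eq_or_ne x 0 with rfl | hxne
    · simp [le_max_iff]
    · have hxn : 0 < ‖x‖ := norm_pos_iff.mpr hxne
      have hu : (‖x‖⁻¹ • x) ∈ Metric.sphere (0 : Fin n → ℝ) 1 := by
        simp [norm_smul, abs_of_pos (inv_pos.mpr hxn), inv_mul_cancel₀ hxn.ne']
      have hfx : f x = ‖x‖ ^ d * f (‖x‖⁻¹ • x) := by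
        have := hsc ‖x‖ (‖x‖⁻¹ • x)
        rwa [smul_smul, mul_inv_cancel₀ hxn.ne', one_smul] at this
      have hge : m ≤ f (‖x‖⁻¹ • x) := hmin hu
      have h1 : ‖x‖ ^ d * m ≤ 1 := by
        calc ‖x‖ ^ d * m ≤ ‖x‖ ^ d * f (‖x‖⁻¹ • x) := by
              apply mul_le_mul_of_nonneg_left hge (by positivity)
          _ = f x := hfx.symm
          _ ≤ 1 := hx
      have hxd : ‖x‖ ^ d ≤ 1 / m := by
        rw [le_div_iff₀ hm]; exact h1
      rcases le_or_gt ‖x‖ 1 with h | h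
      · exact le_max_of_le_left h
      · refine le_max_of_le_right (le_trans ?_ hxd)
        calc ‖x‖ = ‖x‖ ^ 1 := (pow_one _).symm
          _ ≤ ‖x‖ ^ d := pow_le_pow_right₀ h.le (by omega)
  exact ((measure_mono hbound).trans_lt
    (isCompact_closedBall (0 : Fin n → ℝ) _).measure_lt_top).ne

lemma aux_gamma_integral {p : ℝ} (hp : 0 < p) :
    IntegrableOn (fun t : ℝ => (-Real.log t) ^ p) (Ioo (0:ℝ) 1) ∧
    ∫ t in Ioo (0:ℝ) 1, (-Real.log t) ^ p = Real.Gamma (p + 1) := by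
  have hderiv : ∀ x ∈ Ioi (0:ℝ), HasDerivWithinAt (fun s : ℝ => Real.exp (-s))
      (-Real.exp (-x)) (Ioi 0) x := by
    intro x _
    have h := ((Real.hasDerivAt_exp (-x)).comp x (hasDerivAt_neg x)).hasDerivWithinAt
      (s := Ioi (0:ℝ))
    simpa [mul_comm, Function.comp_def] using h
  have hinj : InjOn (fun s : ℝ => Real.exp (-s)) (Ioi 0) :=
    (Real.exp_injective.comp neg_injective).injOn
  have himg : (fun s : ℝ => Real.exp (-s)) '' (Ioi 0) = Ioo 0 1 := by
    ext t
    constructor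
    · rintro ⟨s, hs, rfl⟩
      exact ⟨Real.exp_pos _, Real.exp_lt_one_iff.mpr (by simpa using hs)⟩
    · rintro ⟨h0, h1⟩
      exact ⟨-Real.log t, by simpa using Real.log_neg h0 h1, by simp [Real.exp_log h0]⟩
  have hfun : (fun x : ℝ => |(-Real.exp (-x))| • (fun t : ℝ => (-Real.log t) ^ p) (Real.exp (-x)))
      = fun x : ℝ => Real.exp (-x) * x ^ p := by
    funext x
    simp [abs_of_nonneg (Real.exp_pos (-x)).le, Real.log_exp, smul_eq_mul]
  have hint : IntegrableOn (fun x : ℝ => Real.exp (-x) * x ^ p) (Ioi 0) := by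
    have := Real.GammaIntegral_convergent (s := p + 1) (by linarith)
    simpa using this
  constructor
  · rw [← himg,
      integrableOn_image_iff_integrableOn_abs_deriv_smul measurableSet_Ioi hderiv hinj]
    rw [hfun]; exact hint
  · rw [← himg, integral_image_eq_integral_abs_deriv_smul measurableSet_Ioi hderiv hinj]
    rw [hfun, Real.Gamma_eq_integral (by linarith : (0:ℝ) < p + 1)]
    simp

theorem stmt0 (n d : ℕ) (hn : 1 ≤ n) (hd : 2 ≤ d) (hde : Even d)
    (g : MvPolynomial (Fin n) ℝ) (hg : g.IsHomogeneous d)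
    (hpos : ∀ x : Fin n → ℝ, x ≠ 0 → 0 < eval x g) :
    volume {x : Fin n → ℝ | eval x g ≤ 1} ≠ ⊤ ∧
    (volume {x : Fin n → ℝ | eval x g ≤ 1}).toReal
      = (1 / Real.Gamma (1 + (n : ℝ) / d)) *
          ∫ x : Fin n → ℝ, Real.exp (-(eval x g)) := by
  haveI : Nonempty (Fin n) := ⟨⟨0, hn⟩⟩
  set f : (Fin n → ℝ) → ℝ := fun x => eval x g with hf
  have hsc : ∀ (c : ℝ) x, f (c • x) = c ^ d * f x :=
    fun c x => aux_eval_smul_homog g hg c x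
  have hcont : Continuous f := MvPolynomial.continuous_eval g
  have hf0 : f 0 = 0 := by
    have := hsc 0 0
    rw [smul_zero, zero_pow (by omega : d ≠ 0), zero_mul] at this
    exact this
  set p : ℝ := (n : ℝ) / d with hpdef
  have hp : 0 < p := by
    apply div_pos <;> [exact_mod_cast hn; positivity]
  set V := volume {x : Fin n → ℝ | f x ≤ 1} with hV
  have hVtop : V ≠ ⊤ := aux_finite hn hd f hcont hsc hpos
  refine ⟨hVtop, ?_⟩
  -- layer cake
  have hmeas : Measurable f := hcont.measurable
  have key : ∫⁻ x : Fin n → ℝ, ENNReal.ofReal (Real.exp (-(f x)))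
      = ∫⁻ t in Ioi (0:ℝ), volume {a : Fin n → ℝ | t ≤ Real.exp (-(f a))} :=
    lintegral_eq_lintegral_meas_le volume
      (Filter.Eventually.of_forall fun x => (Real.exp_pos _).le)
      ((Real.measurable_exp.comp hmeas.neg)).aemeasurable
  have hdisj : Disjoint (Ioo (0:ℝ) 1) (Ici (1:ℝ)) := by
    rw [Set.disjoint_left]
    intro a ha hb
    exact absurd hb (not_le.mpr ha.2)
  have hsplit : ∫⁻ t in Ioi (0:ℝ), volume {a : Fin n → ℝ | t ≤ Real.exp (-(f a))}
      = (∫⁻ t in Ioo (0:ℝ) 1, volume {a : Fin n → ℝ | t ≤ Real.exp (-(f a))})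
        + ∫⁻ t in Ici (1:ℝ), volume {a : Fin n → ℝ | t ≤ Real.exp (-(f a))} := by
    rw [← Set.Ioo_union_Ici_eq_Ioi zero_lt_one, lintegral_union measurableSet_Ici hdisj]
  have htail : ∫⁻ t in Ici (1:ℝ), volume {a : Fin n → ℝ | t ≤ Real.exp (-(f a))} = 0 := by
    have h0 : ∀ t ∈ Ici (1:ℝ), volume {a : Fin n → ℝ | t ≤ Real.exp (-(f a))} = 0 := by
      intro t ht
      have hsub : {a : Fin n → ℝ | t ≤ Real.exp (-(f a))} ⊆ {(0 : Fin n → ℝ)} := by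
        intro a ha
        simp only [Set.mem_setOf_eq] at ha
        have h1 : (1:ℝ) ≤ Real.exp (-(f a)) := le_trans ht ha
        have h2 : f a ≤ 0 := by
          have := Real.one_le_exp_iff.mp h1
          linarith
        by_contra hne
        exact absurd h2 (not_le.mpr (hpos a hne))
      exact measure_mono_null hsub (measure_singleton 0)
    calc ∫⁻ t in Ici (1:ℝ), volume {a : Fin n → ℝ | t ≤ Real.exp (-(f a))}
        = ∫⁻ _ in Ici (1:ℝ), (0:ENNReal) :=
          setLIntegral_congr_fun measurableSet_Ici (fun t ht => h0 t ht)
      _ = 0 := lintegral_zero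
  have hmain : ∫⁻ t in Ioo (0:ℝ) 1, volume {a : Fin n → ℝ | t ≤ Real.exp (-(f a))}
      = ENNReal.ofReal (Real.Gamma (p + 1)) * V := by
    have hcong : ∫⁻ t in Ioo (0:ℝ) 1, volume {a : Fin n → ℝ | t ≤ Real.exp (-(f a))}
        = ∫⁻ t in Ioo (0:ℝ) 1, ENNReal.ofReal ((-Real.log t) ^ p) * V := by
      refine setLIntegral_congr_fun measurableSet_Ioo
        (fun t ht => ?_)
      have ht0 : (0:ℝ) < t := ht.1
      have hlog : 0 < -Real.log t := by
        have := Real.log_neg ht0 ht.2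
        linarith
      have hsetEq : {a : Fin n → ℝ | t ≤ Real.exp (-(f a))}
          = {a : Fin n → ℝ | f a ≤ -Real.log t} := by
        ext a
        simp only [Set.mem_setOf_eq]
        rw [← Real.log_le_iff_le_exp ht0, le_neg]
      rw [hsetEq]
      exact aux_scale_measure hd f hsc hlog
    rw [hcong, lintegral_mul_const' V _ hVtop]
    congr 1
    obtain ⟨hint, hval⟩ := aux_gamma_integral hp
    rw [← hval]
    rw [← ofReal_integral_eq_lintegral_ofReal hint]
    refine (ae_restrict_iff' measurableSet_Ioo).mpr
      (Filter.Eventually.of_forall fun t ht => ?_)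
    have := Real.log_neg ht.1 ht.2
    exact Real.rpow_nonneg (by linarith) _
  have hI : ∫⁻ x : Fin n → ℝ, ENNReal.ofReal (Real.exp (-(f x)))
      = ENNReal.ofReal (Real.Gamma (p + 1)) * V := by
    rw [key, hsplit, htail, add_zero, hmain]
  have hGpos : 0 < Real.Gamma (p + 1) := Real.Gamma_pos_of_pos (by linarith)
  have hInt : ∫ x : Fin n → ℝ, Real.exp (-(f x)) = Real.Gamma (p + 1) * V.toReal := by
    rw [integral_eq_lintegral_of_nonneg_ae (f := fun x => Real.exp (-(f x)))
      (Filter.Eventually.of_forall fun x => (Real.exp_pos _).le)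
      ((Real.continuous_exp.comp hcont.neg)).aestronglyMeasurable, hI,
      ENNReal.toReal_mul, ENNReal.toReal_ofReal hGpos.le]
  rw [hInt, add_comm (1:ℝ) p]
  rw [div_mul_eq_mul_div, one_mul, mul_comm, mul_div_assoc, div_self hGpos.ne', mul_one]
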